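/- Let a > 0, δ ≥ 0, α ∈ (0,1). Define ε(k) = √(3δk ln(1/α))/a. Suppose B = B(n) → ∞ as n → ∞, k_opt = ⌊B/a⌋, and k*(n) is the largest integer k with k + ε(k) ≤ k_opt. Then k*(n) → ∞ and the approximation factor 1 − (1/e)·exp((1+ε(k*+1))/(k*+1+ε(k*+1))) converges to 1 − 1/e as n → ∞. -/

import Mathlib

open Filter

/-- Asymptotics of the greedy/Chernoff approximation factor: with constants
`a > 0`, `0 ≤ δ < a`, `α ∈ (0,1)`, budget `B(n) → ∞`, `k_opt(n) = ⌊B(n)/a⌋` and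
`k*(n)` the largest integer `k` with `k + ε(k) ≤ k_opt(n)`, we have `k*(n) → ∞`
and the approximation factor `1 − (1/e)·exp((1+ε(k*+1))/(k*+1+ε(k*+1)))` tends to
`1 − 1/e`. -/
theorem greedy_chernoff_asymptotic (a δ α : ℝ) (ha : 0 < a) (hδ0 : 0 ≤ δ) (hδa : δ < a)
    (hα0 : 0 < α) (hα1 : α < 1)
    (eps : ℕ → ℝ)
    (heps : ∀ k : ℕ, eps k = Real.sqrt (3 * δ * k * Real.log (1 / α)) / a)
    (B : ℕ → ℝ) (hB : Tendsto B atTop atTop)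
    (kopt : ℕ → ℕ) (hkopt : ∀ n, kopt n = ⌊B n / a⌋₊)
    (kstar : ℕ → ℕ)
    (hfeas : ∀ n, (kstar n : ℝ) + eps (kstar n) ≤ kopt n)
    (hmax : ∀ n, ∀ k : ℕ, kstar n < k → (kopt n : ℝ) < k + eps k) :
    Tendsto kstar atTop atTop ∧
      Tendsto (fun n => 1 - (1 / Real.exp 1) *
          Real.exp ((1 + eps (kstar n + 1)) / ((kstar n : ℝ) + 1 + eps (kstar n + 1))))
        atTop (nhds (1 - 1 / Real.exp 1)) := by
  -- preliminaries
  set c : ℝ := 3 * δ * Real.log (1 / α) with hc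
  have hlog : 0 ≤ Real.log (1 / α) := by
    apply Real.log_nonneg
    rw [le_div_iff₀ hα0]; linarith
  have hc0 : 0 ≤ c := by positivity
  have heps' : ∀ k : ℕ, eps k = Real.sqrt (c * k) / a := by
    intro k; rw [heps k, hc]; ring_nf
  have heps_nonneg : ∀ k : ℕ, 0 ≤ eps k := by
    intro k; rw [heps' k]; positivity
  have heps_le : ∀ k : ℕ, eps k ≤ (Real.sqrt c / a) * Real.sqrt k := by
    intro k
    rw [heps' k, Real.sqrt_mul hc0]
    rw [div_mul_eq_mul_div]
  -- kopt tends to infinity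
  have hkopt_top : Tendsto kopt atTop atTop := by
    have h1 : Tendsto (fun n => B n / a) atTop atTop := hB.atTop_div_const ha
    have h2 : Tendsto (fun n => ⌊B n / a⌋₊) atTop atTop :=
      (tendsto_nat_floor_atTop.comp h1)
    refine h2.congr ?_
    intro n; rw [hkopt n]
  -- kstar tends to infinity
  have hks : Tendsto kstar atTop atTop := by
    rw [tendsto_atTop_atTop]
    intro M
    have : ∀ᶠ n in atTop, ⌈(M : ℝ) + eps M⌉₊ ≤ kopt n :=
      hkopt_top.eventually_ge_atTop _
    rw [eventually_atTop] at this
    obtain ⟨N, hN⟩ := this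
    refine ⟨N, fun n hn => ?_⟩
    by_contra hlt
    push_neg at hlt
    have h1 : (kopt n : ℝ) < M + eps M := hmax n M hlt
    have h2 : ((M : ℝ) + eps M) ≤ kopt n := by
      calc ((M : ℝ) + eps M) ≤ (⌈(M : ℝ) + eps M⌉₊ : ℝ) := Nat.le_ceil _
        _ ≤ (kopt n : ℝ) := by exact_mod_cast hN n hn
    linarith
  refine ⟨hks, ?_⟩
  -- the ratio tends to 0
  have hf : Tendsto (fun k : ℕ => (1 + eps (k + 1)) / ((k : ℝ) + 1 + eps (k + 1)))
      atTop (nhds 0) := by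
    have hbound : Tendsto (fun k : ℕ => 1 / ((k : ℝ) + 1) + (Real.sqrt c / a) / Real.sqrt ((k : ℝ) + 1))
        atTop (nhds 0) := by
      have h1 : Tendsto (fun k : ℕ => 1 / ((k : ℝ) + 1)) atTop (nhds 0) :=
        tendsto_one_div_add_atTop_nhds_zero_nat
      have h2 : Tendsto (fun k : ℕ => Real.sqrt ((k : ℝ) + 1)) atTop atTop := by
        apply tendsto_atTop_atTop.2
        intro b
        refine ⟨⌈b ^ 2⌉₊, fun k hk => ?_⟩
        rcases le_or_gt b 0 with hb | hb
        · exact hb.trans (Real.sqrt_nonneg _)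
        · have hb2 : b ^ 2 ≤ (k : ℝ) + 1 := by
            calc b ^ 2 ≤ (⌈b ^ 2⌉₊ : ℝ) := Nat.le_ceil _
              _ ≤ (k : ℝ) := by exact_mod_cast hk
              _ ≤ (k : ℝ) + 1 := by linarith
          calc b = Real.sqrt (b ^ 2) := (Real.sqrt_sq hb.le).symm
            _ ≤ _ := Real.sqrt_le_sqrt hb2
      have h3 : Tendsto (fun k : ℕ => (Real.sqrt c / a) / Real.sqrt ((k : ℝ) + 1))
          atTop (nhds 0) := by
        simpa [div_eq_mul_inv] using
          (tendsto_const_nhds.mul (h2.inv_tendsto_atTop) :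
            Tendsto (fun k : ℕ => (Real.sqrt c / a) * (Real.sqrt ((k : ℝ) + 1))⁻¹) atTop (nhds ((Real.sqrt c / a) * 0)))
      simpa using h1.add h3
    apply squeeze_zero (fun k => ?_) (fun k => ?_) hbound
    · have := heps_nonneg (k + 1)
      have hd : (0:ℝ) < (k : ℝ) + 1 + eps (k + 1) := by positivity
      positivity
    · have he0 := heps_nonneg (k + 1)
      have hle := heps_le (k + 1)
      have hk1 : (0:ℝ) < (k : ℝ) + 1 := by positivity
      have hcast : ((k + 1 : ℕ) : ℝ) = (k : ℝ) + 1 := by push_cast; ring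
      rw [hcast] at hle
      have hd : (0:ℝ) < (k : ℝ) + 1 + eps (k + 1) := by linarith
      calc (1 + eps (k + 1)) / ((k : ℝ) + 1 + eps (k + 1))
          ≤ (1 + eps (k + 1)) / ((k : ℝ) + 1) := by
            apply div_le_div_of_nonneg_left (by linarith) hk1 (by linarith)
        _ ≤ (1 + (Real.sqrt c / a) * Real.sqrt ((k : ℝ) + 1)) / ((k : ℝ) + 1) := by
            gcongr
        _ = 1 / ((k : ℝ) + 1) + (Real.sqrt c / a) / Real.sqrt ((k : ℝ) + 1) := by
            rw [add_div]
            congr 1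
            rw [div_eq_div_iff hk1.ne' (Real.sqrt_pos.mpr hk1).ne']
            rw [mul_assoc, Real.mul_self_sqrt hk1.le]
  -- compose
  have hcomp : Tendsto (fun n => (1 + eps (kstar n + 1)) / ((kstar n : ℝ) + 1 + eps (kstar n + 1)))
      atTop (nhds 0) := hf.comp hks
  have hcont : Tendsto (fun x : ℝ => 1 - (1 / Real.exp 1) * Real.exp x)
      (nhds 0) (nhds (1 - 1 / Real.exp 1)) := by
    have h : Tendsto (fun x : ℝ => 1 - 1 / Real.exp 1 * Real.exp x) (nhds 0)
        (nhds (1 - 1 / Real.exp 1 * Real.exp 0)) :=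
      tendsto_const_nhds.sub (tendsto_const_nhds.mul (Real.continuous_exp.tendsto 0))
    simpa using h
  exact hcont.comp hcomp
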